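/- Fix s ≥ 1, and let n be a multiple of s. Define f: {1,...,n} → {1,...,n} so that f takes each of the values 1,...,s exactly n/s times (an equitable split among s images). Then as n → ∞ (through multiples of s), the fraction of permutations of {1,...,n} that are f-derangements tends to ((s-1)/s)^s. -/

import Mathlib

open Filter Finset

open Nat

lemma nat_card_filter_subtype {α : Type*} [Fintype α] (p : α → Prop) [DecidablePred p] :
    (Finset.univ.filter p).card = Nat.card {x // p x} := by
  rw [Nat.card_eq_fintype_card, Fintype.card_subtype]

lemma card_perm_extend {α : Type*} [Fintype α] [DecidableEq α] (f : α → α) (A : Finset α)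
    (hf : Set.InjOn f ↑A) :
    Nat.card {g : Equiv.Perm α // ∀ a ∈ A, g a = f a} = (Fintype.card α - A.card)! := by
  classical
  rw [Nat.card_eq_fintype_card]
  set B := A.image f with hB
  have hBcard : B.card = A.card := Finset.card_image_of_injOn hf
  have hcompl : Fintype.card {x // x ∈ (Aᶜ : Finset α)} = Fintype.card {x // x ∈ (Bᶜ : Finset α)} := by
    simp [Fintype.card_coe, Finset.card_compl, hBcard]
  have hmem : ∀ (g : Equiv.Perm α), (∀ a ∈ A, g a = f a) → ∀ x : α, x ∈ (Aᶜ : Finset α) →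
      (g x) ∈ (Bᶜ : Finset α) := by
    intro g hg x hx
    rw [Finset.mem_compl] at hx ⊢
    intro hgx
    obtain ⟨a, ha, hfa⟩ := Finset.mem_image.mp hgx
    have h2 : g a = g x := by rw [hg a ha, hfa]
    exact hx (g.injective h2 ▸ ha)
  let ρ : {g : Equiv.Perm α // ∀ a ∈ A, g a = f a} →
      ({x // x ∈ (Aᶜ : Finset α)} → {x // x ∈ (Bᶜ : Finset α)}) :=
    fun g x => ⟨g.1 x, hmem g.1 g.2 x x.2⟩
  have ρinj : ∀ g, Function.Injective (ρ g) := fun g x y h =>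
    Subtype.ext (g.1.injective (congrArg Subtype.val h))
  let Φ : {g : Equiv.Perm α // ∀ a ∈ A, g a = f a} →
      ({x // x ∈ (Aᶜ : Finset α)} ≃ {x // x ∈ (Bᶜ : Finset α)}) :=
    fun g => Equiv.ofBijective (ρ g) ((Fintype.bijective_iff_injective_and_card _).mpr ⟨ρinj g, hcompl⟩)
  have hΦ : ∀ g x, ((Φ g x : α)) = g.1 x := fun g x => rfl
  have Φbij : Function.Bijective Φ := by
    constructor
    · intro g₁ g₂ h
      apply Subtype.ext; apply Equiv.ext; intro x
      by_cases hx : x ∈ A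
      · rw [g₁.2 x hx, g₂.2 x hx]
      · have h1 : Φ g₁ ⟨x, Finset.mem_compl.mpr hx⟩ = Φ g₂ ⟨x, Finset.mem_compl.mpr hx⟩ := by
          rw [h]
        have h2 := congrArg Subtype.val h1
        rwa [hΦ, hΦ] at h2
    · intro e
      have hxc : ∀ x : α, x ∉ A → x ∈ (Aᶜ : Finset α) := fun x hx => Finset.mem_compl.mpr hx
      let g0 : α → α := fun x => if hx : x ∈ A then f x else (e ⟨x, hxc x hx⟩ : α)
      have hg0A : ∀ a ∈ A, g0 a = f a := fun a ha => dif_pos ha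
      have hg0C : ∀ (x) (hx : x ∉ A), g0 x = (e ⟨x, hxc x hx⟩ : α) := fun x hx => dif_neg hx
      have hg0inj : Function.Injective g0 := by
        intro x y hxy
        by_cases hx : x ∈ A <;> by_cases hy : y ∈ A
        · exact hf hx hy (by rwa [hg0A x hx, hg0A y hy] at hxy)
        · exfalso
          have h1 : g0 x ∈ B := by rw [hg0A x hx]; exact Finset.mem_image_of_mem f hx
          have h2 : g0 y ∉ B := by
            rw [hg0C y hy]; exact Finset.mem_compl.mp (e ⟨y, hxc y hy⟩).2
          exact h2 (hxy ▸ h1)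
        · exfalso
          have h1 : g0 y ∈ B := by rw [hg0A y hy]; exact Finset.mem_image_of_mem f hy
          have h2 : g0 x ∉ B := by
            rw [hg0C x hx]; exact Finset.mem_compl.mp (e ⟨x, hxc x hx⟩).2
          exact h2 (hxy.symm ▸ h1)
        · have h1 : (e ⟨x, hxc x hx⟩ : α) = (e ⟨y, hxc y hy⟩ : α) := by
            rw [← hg0C x hx, ← hg0C y hy]; exact hxy
          exact congrArg Subtype.val (e.injective (Subtype.ext h1))
      let g : Equiv.Perm α := Equiv.ofBijective g0 (Finite.injective_iff_bijective.mp hg0inj)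
      have hgg0 : ∀ x, g x = g0 x := fun x => rfl
      refine ⟨⟨g, fun a ha => by rw [hgg0]; exact hg0A a ha⟩, ?_⟩
      apply Equiv.ext
      intro x
      apply Subtype.ext
      rw [hΦ]
      show g0 (x : α) = (e x : α)
      rw [hg0C (x : α) (Finset.mem_compl.mp x.2)]
  calc Fintype.card {g : Equiv.Perm α // ∀ a ∈ A, g a = f a}
      = Fintype.card ({x // x ∈ (Aᶜ : Finset α)} ≃ {x // x ∈ (Bᶜ : Finset α)}) :=
        Fintype.card_of_bijective Φbij
    _ = (Fintype.card {x // x ∈ (Aᶜ : Finset α)})! := Fintype.card_equiv (Fintype.equivOfCardEq hcompl)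
    _ = (Fintype.card α - A.card)! := by simp [Fintype.card_coe, Finset.card_compl]

lemma card_perm_extend_zero {α : Type*} [Fintype α] (f : α → α) (A : Finset α)
    (hf : ¬ Set.InjOn f ↑A) :
    Nat.card {g : Equiv.Perm α // ∀ a ∈ A, g a = f a} = 0 := by
  have : IsEmpty {g : Equiv.Perm α // ∀ a ∈ A, g a = f a} := by
    constructor
    rintro ⟨g, hg⟩
    apply hf
    intro x hx y hy hxy
    exact g.injective (by rw [hg x (Finset.mem_coe.mp hx), hg y (Finset.mem_coe.mp hy), hxy])
  exact Nat.card_of_isEmpty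

lemma card_derange_eq_sum {α : Type*} [Fintype α] [DecidableEq α] (f : α → α) :
    ((Nat.card {g : Equiv.Perm α // ∀ i, g i ≠ f i}) : ℤ)
      = ∑ A : Finset α, (-1 : ℤ)^A.card *
          ((Nat.card {g : Equiv.Perm α // ∀ a ∈ A, g a = f a}) : ℤ) := by
  classical
  simp only [Nat.card_eq_fintype_card, Fintype.card_subtype]
  conv_lhs => rw [← Finset.sum_boole]
  have key : ∀ g : Equiv.Perm α, (if ∀ i, g i ≠ f i then (1:ℤ) else 0)
      = ∏ i : α, ((- if g i = f i then (1:ℤ) else 0) + 1) := by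
    intro g
    by_cases h : ∀ i, g i ≠ f i
    · rw [if_pos h, Finset.prod_eq_one]
      intro i _; rw [if_neg (h i)]; ring
    · push_neg at h
      obtain ⟨i, hi⟩ := h
      rw [if_neg (by push_neg; exact ⟨i, hi⟩)]
      refine (Finset.prod_eq_zero (Finset.mem_univ i) ?_).symm
      rw [if_pos hi]; ring
  simp_rw [key, Finset.prod_add]
  rw [Finset.sum_comm]
  rw [Finset.powerset_univ]
  apply Finset.sum_congr rfl
  intro t _
  have h2 : ∀ g : Equiv.Perm α,
      (∏ i ∈ t, -(if g i = f i then (1:ℤ) else 0)) * ∏ i ∈ univ \ t, (1:ℤ)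
      = (-1 : ℤ)^t.card * (if ∀ i ∈ t, g i = f i then (1:ℤ) else 0) := by
    intro g
    rw [Finset.prod_const_one, mul_one]
    calc (∏ i ∈ t, -(if g i = f i then (1:ℤ) else 0))
        = ∏ i ∈ t, ((-1 : ℤ) * (if g i = f i then (1:ℤ) else 0)) := by
          apply Finset.prod_congr rfl; intro i _; ring
      _ = (∏ _i ∈ t, (-1 : ℤ)) * ∏ i ∈ t, (if g i = f i then (1:ℤ) else 0) :=
          Finset.prod_mul_distrib
      _ = (-1 : ℤ)^t.card * (if ∀ i ∈ t, g i = f i then (1:ℤ) else 0) := by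
          rw [Finset.prod_const, Finset.prod_boole]
          congr
  simp_rw [h2]
  rw [← Finset.mul_sum, Finset.sum_boole]

open scoped Classical in
lemma card_filter_inj_image {α β : Type*} [Fintype α] [DecidableEq α] [DecidableEq β]
    (f : α → β) (m : ℕ) :
    ∀ (T : Finset β), (∀ y ∈ T, (univ.filter fun a => f a = y).card = m) →
    (univ.filter fun A : Finset α => Set.InjOn f ↑A ∧ A.image f = T).card = m ^ T.card := by
  intro T
  induction T using Finset.induction_on with
  | empty =>
    intro _
    rw [Finset.card_empty, pow_zero, Finset.card_eq_one]
    refine ⟨∅, ?_⟩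
    ext A
    simp only [Finset.mem_filter, Finset.mem_univ, true_and, Finset.mem_singleton]
    constructor
    · rintro ⟨_, h⟩; exact Finset.image_eq_empty.mp h
    · rintro rfl
      refine ⟨?_, by simp⟩
      simp only [Finset.coe_empty]
      exact Set.injOn_empty f
  | @insert y T hyT ih =>
    intro hm
    have hmT := fun z hz => hm z (Finset.mem_insert_of_mem hz)
    have hmy := hm y (Finset.mem_insert_self y T)
    rw [Finset.card_insert_of_notMem hyT, pow_succ]
    have key : ((univ.filter fun x => f x = y) ×ˢ
        (univ.filter fun A : Finset α => Set.InjOn f ↑A ∧ A.image f = T)).card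
        = (univ.filter fun A : Finset α => Set.InjOn f ↑A ∧ A.image f = insert y T).card := by
      apply Finset.card_bij (fun (p : α × Finset α) _ => insert p.1 p.2)
      · rintro ⟨a, A⟩ hp
        simp only [Finset.mem_product, Finset.mem_filter, Finset.mem_univ, true_and] at hp
        obtain ⟨hfa, hinj, himg⟩ : _ ∧ _ ∧ _ := ⟨hp.1, hp.2.1, hp.2.2⟩
        have haA : a ∉ A := by
          intro ha
          apply hyT
          rw [← himg, ← hfa]
          exact Finset.mem_image_of_mem f ha
        simp only [Finset.mem_filter, Finset.mem_univ, true_and]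
        constructor
        · rw [Finset.coe_insert, Set.injOn_insert (fun h => haA (Finset.mem_coe.mp h))]
          refine ⟨hinj, ?_⟩
          rw [← Finset.coe_image, himg, hfa]
          exact fun h => hyT (Finset.mem_coe.mp h)
        · rw [Finset.image_insert, hfa, himg]
      · rintro ⟨a₁, A₁⟩ h₁ ⟨a₂, A₂⟩ h₂ heq
        simp only [Finset.mem_product, Finset.mem_filter, Finset.mem_univ, true_and] at h₁ h₂
        have ha₁ : a₁ ∉ A₁ := by
          intro ha; apply hyT
          rw [← h₁.2.2, ← h₁.1]; exact Finset.mem_image_of_mem f ha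
        have ha₂ : a₂ ∉ A₂ := by
          intro ha; apply hyT
          rw [← h₂.2.2, ← h₂.1]; exact Finset.mem_image_of_mem f ha
        have ha12 : a₁ = a₂ := by
          have h3 : a₁ ∈ insert a₂ A₂ := heq ▸ Finset.mem_insert_self a₁ A₁
          rcases Finset.mem_insert.mp h3 with h | h
          · exact h
          · exfalso
            apply hyT
            have h4 : f a₁ ∈ T := h₂.2.2 ▸ Finset.mem_image_of_mem f h
            rwa [h₁.1] at h4
        subst ha12
        have hA : A₁ = A₂ := by
          have h4 := congrArg (fun S => Finset.erase S a₁) heq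
          simpa [Finset.erase_insert ha₁, Finset.erase_insert ha₂] using h4
        rw [hA]
      · intro B hB
        simp only [Finset.mem_filter, Finset.mem_univ, true_and] at hB
        obtain ⟨hinj, himg⟩ := hB
        have hy : y ∈ B.image f := himg ▸ Finset.mem_insert_self y T
        obtain ⟨a, haB, hfa⟩ := Finset.mem_image.mp hy
        refine ⟨(a, B.erase a), ?_, Finset.insert_erase haB⟩
        simp only [Finset.mem_product, Finset.mem_filter, Finset.mem_univ, true_and]
        refine ⟨hfa, hinj.mono (by simp [Finset.erase_subset]), ?_⟩
        ext t
        constructor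
        · intro ht
          obtain ⟨b, hb, rfl⟩ := Finset.mem_image.mp ht
          have hbB := Finset.mem_of_mem_erase hb
          have h5 : f b ∈ insert y T := himg ▸ Finset.mem_image_of_mem f hbB
          rcases Finset.mem_insert.mp h5 with h | h
          · exfalso
            have hba : b = a :=
              hinj (Finset.mem_coe.mpr hbB) (Finset.mem_coe.mpr haB) (by rw [h, hfa])
            exact (Finset.ne_of_mem_erase hb) hba
          · exact h
        · intro ht
          have h6 : t ∈ B.image f := himg ▸ Finset.mem_insert_of_mem ht
          obtain ⟨b, hbB, rfl⟩ := Finset.mem_image.mp h6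
          have hba : b ≠ a := by
            intro h
            apply hyT
            rw [← hfa, ← h]; exact ht
          exact Finset.mem_image.mpr ⟨b, Finset.mem_erase.mpr ⟨hba, hbB⟩, rfl⟩
    rw [← key, Finset.card_product, hmy, ih hmT, mul_comm]

lemma card_filter_val_lt (n s : ℕ) (h : s ≤ n) :
    (univ.filter fun y : Fin n => y.val < s).card = s := by
  rcases eq_or_lt_of_le h with rfl | h'
  · rw [Finset.filter_true_of_mem (fun y _ => y.isLt)]
    simp
  · have h2 : (univ.filter fun y : Fin n => y.val < s) = Finset.Iio (⟨s, h'⟩ : Fin n) := by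
      ext y; simp [Finset.mem_Iio, Fin.lt_def]
    rw [h2, Fin.card_Iio]

lemma derange_count (s n : ℕ) (hsn : s ≤ n) (F : Fin n → Fin n)
    (hval : ∀ i, (F i).val < s)
    (heq : ∀ y : Fin n, y.val < s → (univ.filter fun i => F i = y).card = n / s) :
    ((Nat.card {g : Equiv.Perm (Fin n) // ∀ i, g i ≠ F i}) : ℤ)
      = ∑ k ∈ range (s+1), (-1 : ℤ)^k * (s.choose k) * ((n/s : ℕ) : ℤ)^k * ((n - k)! : ℤ) := by
  classical
  rw [card_derange_eq_sum F]
  have hN : ∀ A : Finset (Fin n),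
      (-1 : ℤ)^A.card * ((Nat.card {g : Equiv.Perm (Fin n) // ∀ a ∈ A, g a = F a}) : ℤ)
      = if Set.InjOn F ↑A then (-1 : ℤ)^A.card * ((n - A.card)! : ℤ) else 0 := by
    intro A
    by_cases h : Set.InjOn F ↑A
    · rw [if_pos h, card_perm_extend F A h, Fintype.card_fin]
    · rw [if_neg h, card_perm_extend_zero F A h]
      simp
  simp_rw [hN]
  rw [← Finset.sum_filter]
  set V : Finset (Fin n) := univ.filter (fun y : Fin n => y.val < s) with hV
  have hVcard : V.card = s := card_filter_val_lt n s hsn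
  have hmaps : ∀ A ∈ (univ : Finset (Finset (Fin n))).filter (fun A : Finset (Fin n) => Set.InjOn F ↑A),
      A.image F ∈ V.powerset := by
    intro A _
    rw [Finset.mem_powerset]
    intro y hy
    obtain ⟨i, _, rfl⟩ := Finset.mem_image.mp hy
    exact Finset.mem_filter.mpr ⟨Finset.mem_univ _, hval i⟩
  rw [← Finset.sum_fiberwise_of_maps_to hmaps]
  have hinner : ∀ T ∈ V.powerset,
      ∑ A ∈ ((univ : Finset (Finset (Fin n))).filter (fun A : Finset (Fin n) => Set.InjOn F ↑A)).filter
        (fun A => A.image F = T), ((-1 : ℤ)^A.card * ((n - A.card)! : ℤ))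
      = ((n/s : ℕ) : ℤ)^T.card * ((-1 : ℤ)^T.card * ((n - T.card)! : ℤ)) := by
    intro T hT
    have hTV := Finset.mem_powerset.mp hT
    have hcongr : ∀ A ∈ ((univ : Finset (Finset (Fin n))).filter (fun A : Finset (Fin n) => Set.InjOn F ↑A)).filter
        (fun A => A.image F = T), ((-1 : ℤ)^A.card * ((n - A.card)! : ℤ))
        = ((-1 : ℤ)^T.card * ((n - T.card)! : ℤ)) := by
      intro A hA
      simp only [Finset.mem_filter, Finset.mem_univ, true_and] at hA
      have hc : A.card = T.card := by rw [← hA.2, Finset.card_image_of_injOn hA.1]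
      rw [hc]
    rw [Finset.sum_congr rfl hcongr, Finset.sum_const, nsmul_eq_mul]
    congr 1
    rw [Finset.filter_filter,
      card_filter_inj_image F (n/s) T (fun y hy => heq y ((Finset.mem_filter.mp (hTV hy)).2))]
    push_cast
    ring
  rw [Finset.sum_congr rfl hinner, Finset.sum_powerset, hVcard]
  apply Finset.sum_congr rfl
  intro k hk
  rw [Finset.sum_powersetCard k V (fun c => ((n/s : ℕ) : ℤ)^c * ((-1 : ℤ)^c * ((n - c)! : ℤ)))]
  rw [hVcard, nsmul_eq_mul]
  push_cast
  ring

open Filter in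
lemma ratio_lim (c : ℕ) : Tendsto (fun n : ℕ => (n:ℝ)/((n:ℝ) - c)) atTop (nhds 1) := by
  have h1 : Tendsto (fun n : ℕ => 1 - (c:ℝ)/n) atTop (nhds 1) := by
    have h0 := tendsto_const_div_atTop_nhds_zero_nat (c:ℝ)
    simpa using tendsto_const_nhds.sub h0
  have h2 := h1.inv₀ (by norm_num : (1:ℝ) ≠ 0)
  rw [inv_one] at h2
  apply h2.congr'
  filter_upwards [Filter.eventually_gt_atTop c] with n hn
  have hc : (c:ℝ) < n := by exact_mod_cast hn
  have hn0 : (n:ℝ) ≠ 0 := ne_of_gt (lt_of_le_of_lt (Nat.cast_nonneg c) hc)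
  have h3 : 1 - (c:ℝ)/n = ((n:ℝ) - c)/n := by field_simp
  rw [h3, inv_div]

/-- Fix s ≥ 1. For each n a multiple of s, let f_n : {1,...,n} → {1,...,n} take
each of the values 1,...,s exactly n/s times (and only those values). Then as
n → ∞ through multiples of s, the fraction of permutations of {1,...,n} that are
f_n-derangements tends to ((s-1)/s)^s. -/
theorem stmt_4 (s : ℕ) (hs : 1 ≤ s) (F : (n : ℕ) → Fin n → Fin n)
    (hval : ∀ n, s ∣ n → ∀ i : Fin n, (F n i).val < s)
    (heq : ∀ n, s ∣ n → ∀ y : Fin n, y.val < s →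
      (Finset.univ.filter fun i : Fin n => F n i = y).card = n / s) :
    Tendsto
      (fun n : ℕ =>
        ((Finset.univ.filter fun g : Equiv.Perm (Fin n) => ∀ i, g i ≠ F n i).card : ℝ)
          / (Nat.factorial n))
      (atTop ⊓ Filter.principal {n | s ∣ n})
      (nhds ((((s : ℝ) - 1) / s) ^ s)) := by
  classical
  have hs0 : (s:ℝ) ≠ 0 := Nat.cast_ne_zero.mpr (by omega)
  have hL : (((s:ℝ) - 1)/s)^s = ∑ k ∈ range (s+1), (-1:ℝ)^k * (s.choose k) * ((1:ℝ)/s)^k := by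
    have h1 : ((s:ℝ)-1)/s = (-1) * (1/s) + 1 := by field_simp; ring
    rw [h1, add_pow]
    apply Finset.sum_congr rfl
    intro k _
    rw [one_pow, mul_pow]
    ring
  rw [hL]
  set G : ℕ → ℝ := fun n => ∑ k ∈ range (s+1),
    (-1:ℝ)^k * (s.choose k) * ((1:ℝ)/s)^k * ∏ j ∈ range k, (n:ℝ)/((n:ℝ) - j) with hG
  have hGlim : Tendsto G atTop
      (nhds (∑ k ∈ range (s+1), (-1:ℝ)^k * (s.choose k) * ((1:ℝ)/s)^k)) := by
    apply tendsto_finset_sum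
    intro k _
    have hprod : Tendsto (fun n : ℕ => ∏ j ∈ range k, (n:ℝ)/((n:ℝ) - j)) atTop (nhds 1) := by
      have h4 := tendsto_finset_prod (range k) (fun j (_ : j ∈ range k) => ratio_lim j)
      simpa using h4
    have h5 := (tendsto_const_nhds
      (x := (-1:ℝ)^k * (s.choose k) * ((1:ℝ)/s)^k) (f := atTop)).mul hprod
    simpa using h5
  have hmem : {n : ℕ | s + 1 ≤ n} ∩ {n | s ∣ n} ∈ (atTop ⊓ Filter.principal {n | s ∣ n}) :=
    Filter.inter_mem_inf (Filter.mem_atTop (s+1)) (Filter.mem_principal_self _)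
  refine Filter.Tendsto.congr' (Filter.eventuallyEq_of_mem hmem ?_) (hGlim.mono_left inf_le_left)
  rintro n ⟨hn, hdvd⟩
  simp only [Set.mem_setOf_eq] at hn hdvd
  have hsn : s ≤ n := by omega
  have hcount := derange_count s n hsn (F n) (hval n hdvd) (heq n hdvd)
  have hcast : ((Nat.card {g : Equiv.Perm (Fin n) // ∀ i, g i ≠ F n i}) : ℝ)
      = ∑ k ∈ range (s+1), (-1:ℝ)^k * (s.choose k) * ((n/s : ℕ) : ℝ)^k * ((n - k)! : ℝ) := by
    have h7 := congrArg (fun z : ℤ => (z : ℝ)) hcount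
    push_cast at h7
    exact h7
  show G n = ((Finset.univ.filter fun g : Equiv.Perm (Fin n) => ∀ i, g i ≠ F n i).card : ℝ)
      / (n ! : ℝ)
  rw [nat_card_filter_subtype, hcast, Finset.sum_div]
  apply Finset.sum_congr rfl
  intro k hk
  have hks : k ≤ s := by have := Finset.mem_range.mp hk; omega
  have hkn : k ≤ n := hks.trans hsn
  have hns : ((n/s : ℕ) : ℝ) = (n:ℝ)/s := Nat.cast_div hdvd hs0
  have hdesc : ((n.descFactorial k : ℕ) : ℝ) = ∏ j ∈ range k, ((n:ℝ) - j) := by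
    rw [Nat.descFactorial_eq_prod_range, Nat.cast_prod]
    apply Finset.prod_congr rfl
    intro j hj
    have hjn : j ≤ n := le_of_lt (lt_of_lt_of_le (Finset.mem_range.mp hj) hkn)
    exact Nat.cast_sub hjn
  have hfac : ((n)! : ℝ) = ((n-k)! : ℝ) * ∏ j ∈ range k, ((n:ℝ) - j) := by
    calc ((n)! : ℝ) = (((n-k)! * n.descFactorial k : ℕ) : ℝ) := by
          rw [Nat.factorial_mul_descFactorial hkn]
      _ = ((n-k)! : ℝ) * ((n.descFactorial k : ℕ) : ℝ) := by push_cast; ring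
      _ = ((n-k)! : ℝ) * ∏ j ∈ range k, ((n:ℝ) - j) := by rw [hdesc]
  have hprod_ne : (∏ j ∈ range k, ((n:ℝ) - j)) ≠ 0 := by
    apply Finset.prod_ne_zero_iff.mpr
    intro j hj
    have hjn : j < n := lt_of_lt_of_le (Finset.mem_range.mp hj) hkn
    have : (j:ℝ) < n := by exact_mod_cast hjn
    linarith
  have hfacne : ((n-k)! : ℝ) ≠ 0 := Nat.cast_ne_zero.mpr (Nat.factorial_ne_zero _)
  rw [hfac, hns]
  field_simp
  rw [Finset.prod_div_distrib, Finset.prod_const, Finset.card_range]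
  rw [mul_assoc _ (_ / _), div_mul_cancel₀ _ hprod_ne, div_pow]
  ring
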